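/- arXiv:1203.5658 — 5 statements merged into one kernel-verified Lean document; each statement's English description precedes it below -/
import Mathlib

section
/- Let G be a finite group acting on a chain complex C of abelian groups (each group element acting as a chain map, with the action compatible with composition). Let C/G denote the subcomplex whose d-th group consists of all elements of the form [c] = Σ_{g∈G} g·c for c ∈ C_d. If the homology H_d(C/G) contains an element of order q (a positive integer), then H_d(C) contains an element of order q/gcd(q,|G|). In particular, if q and |G| are coprime, then H_d(C) contains an element of order q. -/
open CategoryTheory CategoryTheory.Limits

set_option synthInstance.maxHeartbeats 400000
set_option maxHeartbeats 1000000

private lemma aux_transfer_order {A B : Type*} [AddCommGroup A] [AddCommGroup B]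
    (u : A →+ B) (v : B →+ A) (n : ℕ) (huv : ∀ a, v (u a) = n • a)
    (x : A) (q : ℕ) (hq : 0 < q) (hx : addOrderOf x = q) :
    ∃ y : B, addOrderOf y = q / Nat.gcd q n := by
  set t := addOrderOf (u x) with ht
  have hxfin : IsOfFinAddOrder x := by
    rw [← addOrderOf_pos_iff, hx]; exact hq
  have htq : t ∣ q := by
    apply addOrderOf_dvd_of_nsmul_eq_zero
    rw [← map_nsmul, ← hx, addOrderOf_nsmul_eq_zero, map_zero]
  have htne : t ≠ 0 := by
    intro h0
    rw [h0] at htq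
    exact hq.ne' (Nat.eq_zero_of_zero_dvd htq)
  have hnx : addOrderOf (n • x) = q / Nat.gcd q n := by
    rw [hxfin.addOrderOf_nsmul, hx]
  have hmt : q / Nat.gcd q n ∣ t := by
    rw [← hnx, ← huv x]
    exact addOrderOf_map_dvd v (u x)
  exact ⟨(t / (q / Nat.gcd q n)) • u x, addOrderOf_nsmul_addOrderOf_sub htne hmt⟩

/-- Let a finite group `G` act on a chain complex `C` of abelian groups by chain
maps (`ρ` is a monoid homomorphism into the endomorphisms of `C`, so the action is
compatible with composition).  The subcomplex `C/G` consists of the symmetrized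
chains `[c] = Σ_{g∈G} g·c`, i.e. it is the image of the chain map `N = Σ_{g∈G} ρ g`.
If `H_d(C/G)` contains an element of order `q > 0`, then `H_d(C)` contains an
element of order `q / gcd(q, |G|)`; in particular, if `q` and `|G|` are coprime,
then `H_d(C)` contains an element of order `q`. -/
theorem stmt_0 (G : Type) [Group G] [Fintype G]
    (C : ChainComplex AddCommGrpCat ℤ) (ρ : G →* CategoryTheory.End C)
    (d : ℤ) (q : ℕ) (hq : 0 < q)
    (h : ∃ x : ((Limits.image (∑ g : G, (ρ g : C ⟶ C))).homology d),
      addOrderOf x = q) :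
    (∃ y : (C.homology d), addOrderOf y = q / Nat.gcd q (Fintype.card G)) ∧
    (Nat.Coprime q (Fintype.card G) → ∃ y : (C.homology d), addOrderOf y = q) := by
  set N : C ⟶ C := ∑ g : G, (ρ g : C ⟶ C) with hN
  obtain ⟨x, hx⟩ := h
  set n := Fintype.card G with hn
  -- N ≫ N = n • N
  have habs : ∀ g : G, (ρ g : C ⟶ C) ≫ N = N := by
    intro g
    rw [hN, Preadditive.comp_sum]
    exact Fintype.sum_equiv (Equiv.mulRight g)
      (fun h => (ρ g : C ⟶ C) ≫ (ρ h : C ⟶ C))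
      (fun h => (ρ h : C ⟶ C))
      (fun h => by show _ = (ρ (h * g) : C ⟶ C); rw [map_mul]; rfl)
  have hNN : N ≫ N = n • N := by
    conv_lhs => rw [hN, Preadditive.sum_comp]
    rw [Finset.sum_congr rfl (fun g _ => habs g)]
    simp [hn]
  set e : C ⟶ image N := factorThruImage N with he
  set ι : image N ⟶ C := image.ι N with hι
  have hfac : e ≫ ι = N := image.fac N
  have hkey : ι ≫ e = n • 𝟙 (image N) := by
    rw [← cancel_mono ι, ← cancel_epi e]
    simp only [Category.assoc]
    rw [hfac]
    calc e ≫ ι ≫ N = (e ≫ ι) ≫ N := by rw [Category.assoc]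
      _ = N ≫ N := by rw [hfac]
      _ = n • N := hNN
      _ = e ≫ (n • 𝟙 (image N)) ≫ ι := by
          rw [Preadditive.nsmul_comp, Category.id_comp, Preadditive.comp_nsmul, hfac]
  -- pass to homology
  have hkeyH : HomologicalComplex.homologyMap ι d ≫ HomologicalComplex.homologyMap e d
      = n • 𝟙 ((image N).homology d) := by
    set F := HomologicalComplex.homologyFunctor AddCommGrpCat (ComplexShape.down ℤ) d with hF
    rw [← HomologicalComplex.homologyMap_comp, hkey]
    have h1 : HomologicalComplex.homologyMap (n • 𝟙 (image N)) d
        = F.map (n • 𝟙 (image N)) := rfl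
    have h2 : 𝟙 ((image N).homology d) = F.map (𝟙 (image N)) := (F.map_id _).symm
    rw [h1, h2, F.map_nsmul]; rfl
  set u : ((image N).homology d) →+ (C.homology d) :=
    (HomologicalComplex.homologyMap ι d).hom with hu
  set v : (C.homology d) →+ ((image N).homology d) :=
    (HomologicalComplex.homologyMap e d).hom with hv
  have huv : ∀ a, v (u a) = n • a := by
    intro a
    have h2 := ConcreteCategory.congr_hom hkeyH a
    simpa using h2
  have main : ∃ y : (C.homology d), addOrderOf y = q / Nat.gcd q n := by
    exact aux_transfer_order (A := ↥((image N).homology d)) (B := ↥(C.homology d))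
      u v n huv x q hq hx
  refine ⟨main, fun hcop => ?_⟩
  obtain ⟨y, hy⟩ := main
  exact ⟨y, by rwa [hcop.gcd_eq_one, Nat.div_one] at hy⟩
end

section
/- The 4×4 integer matrix M = [[2,−1,0,0],[−1,0,−1,0],[0,−2,1,0],[2,0,0,1]] has determinant −5, and consequently the cokernel of the ℤ-linear map ℤ⁴ → ℤ⁴ given by M is a cyclic group of order 5. -/
/-- The boundary matrix in degree 5 of the quotient chain complex of the matching
complex `M₁₄` under the action of `S₂ × (S₃ ≀ S₄)`. -/
def jonssonMatrix : Matrix (Fin 4) (Fin 4) ℤ :=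
  !![2, -1, 0, 0;
     -1, 0, -1, 0;
     0, -2, 1, 0;
     2, 0, 0, 1]

/-- The auxiliary linear functional `x ↦ 3 x₀ + x₁ + x₂ mod 5`. -/
def jonssonAux : (Fin 4 → ℤ) →ₗ[ℤ] ZMod 5 where
  toFun x := ((3 * x 0 + x 1 + x 2 : ℤ) : ZMod 5)
  map_add' x y := by simp [Pi.add_apply]; ring
  map_smul' c x := by simp [Pi.smul_apply, smul_eq_mul]; ring

lemma jonssonAux_surjective : Function.Surjective jonssonAux := by
  intro z
  refine ⟨![0, (z.val : ℤ), 0, 0], ?_⟩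
  show (((3 * 0 + (z.val : ℤ) + 0 : ℤ)) : ZMod 5) = z
  push_cast
  simp [ZMod.natCast_val]

lemma jonssonAux_ker : LinearMap.ker jonssonAux = LinearMap.range (Matrix.toLin' jonssonMatrix) := by
  ext x
  constructor
  · intro hx
    have h0 : ((3 * x 0 + x 1 + x 2 : ℤ) : ZMod 5) = 0 := hx
    have h5 : (5 : ℤ) ∣ 3 * x 0 + x 1 + x 2 :=
      (ZMod.intCast_zmod_eq_zero_iff_dvd _ 5).mp h0
    obtain ⟨k, hk⟩ := h5
    refine ⟨![x 0 - k, x 0 - 2 * k, 2 * x 0 - 4 * k + x 2, -2 * x 0 + 2 * k + x 3], ?_⟩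
    funext i
    fin_cases i <;>
      simp [Matrix.toLin'_apply, Matrix.mulVec, dotProduct, jonssonMatrix,
        Fin.sum_univ_four] <;>
      linarith
  · rintro ⟨y, rfl⟩
    show ((3 * _ + _ + _ : ℤ) : ZMod 5) = 0
    have : (3 * (Matrix.toLin' jonssonMatrix y) 0 + (Matrix.toLin' jonssonMatrix y) 1 +
        (Matrix.toLin' jonssonMatrix y) 2 : ℤ) = 5 * (y 0 - y 1) := by
      simp [Matrix.toLin'_apply, Matrix.mulVec, dotProduct, jonssonMatrix,
        Fin.sum_univ_four]
      ring
    rw [this]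
    push_cast
    ring_nf
    simp [show (5:ZMod 5) = 0 from rfl]

/-- The matrix has determinant `-5`, and the cokernel of the associated `ℤ`-linear map
`ℤ⁴ → ℤ⁴` is a cyclic group of order `5`. -/
theorem stmt_3 :
    jonssonMatrix.det = -5 ∧
    Nonempty (((Fin 4 → ℤ) ⧸ LinearMap.range (Matrix.toLin' jonssonMatrix)) ≃+ ZMod 5) := by
  constructor
  · simp [jonssonMatrix, Matrix.det_succ_row_zero, Fin.sum_univ_succ, Fin.succAbove]
  · exact ⟨((Submodule.quotEquivOfEq _ _ jonssonAux_ker.symm).trans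
      (jonssonAux.quotKerEquivOfSurjective jonssonAux_surjective)).toAddEquiv⟩
end

section
/- Let V be a finite totally ordered set, E a set of unordered pairs (possibly loops) of elements of V (elements x, y 'commute' if {x,y} ∈ E, and 'anticommute' otherwise), and Δ a family of finite multisets over V satisfying: (A) if σ, τ ∈ Δ and σ ⊆ ρ ⊆ τ then ρ ∈ Δ; (B) if σ ∈ Δ, x and y commute, and {x,y} ⊆ σ, then σ∖{x,y} ∉ Δ; (C) any element appearing with multiplicity at least 2 in some σ ∈ Δ commutes with itself. For a coefficient ring R, let C_d be the free R-module on multisets in Δ of size d+1, with generator x₀⊗⋯⊗x_d for σ = {x₀ ≤ ⋯ ≤ x_d} ∈ Δ (and set to 0 if σ ∉ Δ). Define ∂(x₀⊗⋯⊗x_d) = Σ_{i=0}^{d} (−1)^{d−η_i} · (x₀⊗⋯⊗x̂_i⊗⋯⊗x_d), where η_i is the number of indices j > i such that x_i and x_j anticommute. Then ∂∘∂ = 0, i.e., (C_*, ∂) is a chain complex. -/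
open scoped Classical

noncomputable section

variable {V : Type*} [LinearOrder V]

/-- The chain group in "size" `s`: the free `R`-module on the multisets of size
`s` belonging to the family `Δ` (multisets not in `Δ` correspond to the zero
generator). -/
abbrev multisetChains (R : Type*) [CommRing R] (Δ : Set (Multiset V)) (s : ℕ) : Type _ :=
  {σ : Multiset V // σ ∈ Δ ∧ Multiset.card σ = s} →₀ R

/-- The generator of `multisetChains` corresponding to `τ` with coefficient `c`;
it is zero when `τ ∉ Δ` (or has the wrong size). -/
def multisetGen (R : Type*) [CommRing R] (Δ : Set (Multiset V)) (s : ℕ)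
    (τ : Multiset V) (c : R) : multisetChains R Δ s :=
  if h : τ ∈ Δ ∧ Multiset.card τ = s then Finsupp.single ⟨τ, h⟩ c else 0

/-- One term of the boundary: remove the element `x` (sitting at position `i` of
the sorted list of `σ`), with sign `(-1)^{d - ηᵢ}` where `d = s` is the degree
and `ηᵢ` is the number of later elements of the sorted list anticommuting
with `x` (elements `x`, `y` commute iff `s(x,y) ∈ E`). -/
def boundaryStep (R : Type*) [CommRing R] (Δ : Set (Multiset V)) (E : Set (Sym2 V))
    (s : ℕ) (σ : Multiset V) (x : V) (i : ℕ) : multisetChains R Δ s :=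
  multisetGen R Δ s (σ.erase x)
    ((-1 : R) ^ (s - ((σ.sort (· ≤ ·)).drop (i + 1)).countP
      (fun y => decide (s(x, y) ∉ E))))

/-- The boundary of the generator corresponding to a multiset of size `s + 1`. -/
def boundaryGen (R : Type*) [CommRing R] (Δ : Set (Multiset V)) (E : Set (Sym2 V))
    (s : ℕ) (σ : {σ : Multiset V // σ ∈ Δ ∧ Multiset.card σ = s + 1}) :
    multisetChains R Δ s :=
  ∑ i : Fin (s + 1),
    boundaryStep R Δ E s σ.1
      ((σ.1.sort (· ≤ ·)).get ⟨i.1, by rw [Multiset.length_sort, σ.2.2]; exact i.2⟩) i.1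

/-- The boundary operator of the multiset chain complex. -/
def multisetBoundary (R : Type*) [CommRing R] (Δ : Set (Multiset V)) (E : Set (Sym2 V))
    (s : ℕ) : multisetChains R Δ (s + 1) →ₗ[R] multisetChains R Δ s :=
  Finsupp.lsum R fun σ =>
    LinearMap.toSpanSingleton R (multisetChains R Δ s) (boundaryGen R Δ E s σ)

end

section
variable {V : Type*} [LinearOrder V]
variable {V : Type*} [LinearOrder V]

lemma coe_erase_key (t d : List V) (a : V) :
    (↑(t ++ d) : Multiset V) = (↑(t ++ a :: d) : Multiset V).erase a := by
  rw [← Multiset.coe_add, ← Multiset.coe_add, ← Multiset.cons_coe,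
    Multiset.add_cons, Multiset.erase_cons_head]

lemma coe_eraseIdx_aux (l : List V) (i : ℕ) (h : i < l.length) :
    (↑(l.eraseIdx i) : Multiset V) = (↑l : Multiset V).erase l[i] := by
  calc (↑(l.eraseIdx i) : Multiset V) = ↑(l.take i ++ l.drop (i+1)) := by
        rw [List.eraseIdx_eq_take_drop_succ]
    _ = (↑(l.take i ++ l[i] :: l.drop (i+1)) : Multiset V).erase l[i] := coe_erase_key _ _ _
    _ = (↑l : Multiset V).erase l[i] := by
        rw [← List.drop_eq_getElem_cons h, List.take_append_drop]

lemma sort_erase_aux (σ : Multiset V) (i : ℕ) (h : i < (σ.sort (· ≤ ·)).length) :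
    (σ.erase ((σ.sort (· ≤ ·))[i])).sort (· ≤ ·) = (σ.sort (· ≤ ·)).eraseIdx i := by
  refine (fun hp h1 h2 => List.Perm.eq_of_pairwise' (r := (· ≤ ·)) h1 h2 hp) ?_ ?_ ?_
  · rw [← Multiset.coe_eq_coe, Multiset.sort_eq, coe_eraseIdx_aux _ _ h, Multiset.sort_eq]
  · exact Multiset.pairwise_sort _ _
  · exact (Multiset.pairwise_sort σ _).sublist (List.eraseIdx_sublist _ _)

lemma drop_eraseIdx_lt (l : List V) (p q : ℕ) (hpq : p < q) (hp : p < l.length) :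
    (l.eraseIdx p).drop q = l.drop (q+1) := by
  rw [List.eraseIdx_eq_take_drop_succ, List.drop_append, List.drop_take,
    Nat.sub_eq_zero_of_le hpq.le, List.take_zero, List.nil_append, List.length_take,
    Nat.min_eq_left hp.le, List.drop_drop]
  congr 1
  omega

lemma drop_eraseIdx_gt (l : List V) (p q : ℕ) (hpq : p < q) (hq : q < l.length) :
    (l.eraseIdx q).drop (p+1) = (l.drop (p+1)).eraseIdx (q-p-1) := by
  rw [List.eraseIdx_eq_take_drop_succ, List.eraseIdx_eq_take_drop_succ,
    List.drop_append, List.drop_take, List.length_take,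
    Nat.min_eq_left hq.le, Nat.sub_eq_zero_of_le (by omega : p + 1 ≤ q), List.drop_zero,
    List.drop_drop]
  congr 2 <;> omega

lemma countP_eraseIdx_aux (p : V → Bool) (l : List V) (i : ℕ) (h : i < l.length) :
    l.countP p = (l.eraseIdx i).countP p + (if p l[i] then 1 else 0) := by
  conv_lhs => rw [show l = l.take i ++ l[i] :: l.drop (i+1) by
    rw [← List.drop_eq_getElem_cons h, List.take_append_drop]]
  rw [List.eraseIdx_eq_take_drop_succ, List.countP_append, List.countP_append,
    List.countP_cons]
  ring

lemma neg_one_pow_sub {R : Type*} [CommRing R] {m k : ℕ} (h : k ≤ m) :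
    (-1 : R) ^ (m - k) = (-1) ^ m * (-1) ^ k := by
  rw [← pow_add, show m + k = (m - k) + 2 * k by omega, pow_add, pow_mul,
    neg_one_sq, one_pow, mul_one]

lemma boundary_single (R : Type*) [CommRing R] (Δ : Set (Multiset V)) (E : Set (Sym2 V))
    (s : ℕ) (a : {σ : Multiset V // σ ∈ Δ ∧ Multiset.card σ = s + 1}) (c : R) :
    multisetBoundary R Δ E s (Finsupp.single a c) = c • boundaryGen R Δ E s a := by
  simp [multisetBoundary, LinearMap.toSpanSingleton_apply]

lemma smul_multisetGen (R : Type*) [CommRing R] (Δ : Set (Multiset V)) (s : ℕ)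
    (τ : Multiset V) (a c : R) :
    a • multisetGen R Δ s τ c = multisetGen R Δ s τ (a * c) := by
  rw [multisetGen, multisetGen]
  split_ifs
  · rw [Finsupp.smul_single, smul_eq_mul]
  · rw [smul_zero]

lemma add_multisetGen (R : Type*) [CommRing R] (Δ : Set (Multiset V)) (s : ℕ)
    (τ : Multiset V) (c d : R) :
    multisetGen R Δ s τ c + multisetGen R Δ s τ d = multisetGen R Δ s τ (c + d) := by
  rw [multisetGen, multisetGen, multisetGen]
  split_ifs
  · rw [Finsupp.single_add]
  · rw [add_zero]

noncomputable def dterm (R : Type*) [CommRing R] (Δ : Set (Multiset V)) (E : Set (Sym2 V)) (s : ℕ)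
    (l : List V) (i j : ℕ) : multisetChains R Δ s :=
  if h : i < l.length ∧ j < (l.eraseIdx i).length ∧ (↑(l.eraseIdx i) : Multiset V) ∈ Δ then
    multisetGen R Δ s ↑((l.eraseIdx i).eraseIdx j)
      ((-1) ^ (s + 1 - (l.drop (i+1)).countP (fun y => decide (s(l[i]'h.1, y) ∉ E)))
        * (-1) ^ (s - ((l.eraseIdx i).drop (j+1)).countP
            (fun y => decide (s((l.eraseIdx i)[j]'h.2.1, y) ∉ E))))
  else 0

lemma neg_one_pow_sub' {R : Type*} [CommRing R] {m k : ℕ} (h : k ≤ m) :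
    (-1 : R) ^ (m - k) = (-1) ^ m * (-1) ^ k := by
  rw [← pow_add, show m + k = (m - k) + 2 * k by omega, pow_add, pow_mul,
    neg_one_sq, one_pow, mul_one]

lemma Dstep (R : Type*) [CommRing R] (Δ : Set (Multiset V)) (E : Set (Sym2 V)) (s : ℕ)
    (σ : Multiset V) (hcard : Multiset.card σ = s + 2)
    (i : ℕ) (hi : i < (σ.sort (· ≤ ·)).length) :
    multisetBoundary R Δ E s
        (boundaryStep R Δ E (s+1) σ ((σ.sort (· ≤ ·))[i]) i)
      = ∑ j : Fin (s+1), dterm R Δ E s (σ.sort (· ≤ ·)) i j := by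
  have hσl : (↑(σ.sort (· ≤ ·)) : Multiset V) = σ := Multiset.sort_eq σ _
  have hlen : (σ.sort (· ≤ ·)).length = s + 2 := by
    rw [Multiset.length_sort, hcard]
  have hx : (σ.sort (· ≤ ·))[i] ∈ σ := by
    exact (Multiset.mem_sort _).1 (List.getElem_mem _)
  have hτcoe : σ.erase ((σ.sort (· ≤ ·))[i]) = ↑((σ.sort (· ≤ ·)).eraseIdx i) := by
    rw [coe_eraseIdx_aux _ _ hi, hσl]
  have hτcard : Multiset.card (σ.erase ((σ.sort (· ≤ ·))[i])) = s + 1 := by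
    rw [Multiset.card_erase_of_mem hx, hcard]; rfl
  have hjlt : ∀ j : Fin (s+1), j.1 < ((σ.sort (· ≤ ·)).eraseIdx i).length := by
    intro j; rw [List.length_eraseIdx, if_pos hi, hlen]; exact lt_of_lt_of_le j.2 (by omega)
  rw [boundaryStep]
  by_cases hΔ : σ.erase ((σ.sort (· ≤ ·))[i]) ∈ Δ
  · rw [multisetGen, dif_pos ⟨hΔ, hτcard⟩, boundary_single, boundaryGen, Finset.smul_sum]
    apply Finset.sum_congr rfl
    intro j _
    have hsort : ((σ.erase ((σ.sort (· ≤ ·))[i])).sort (· ≤ ·))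
        = (σ.sort (· ≤ ·)).eraseIdx i := sort_erase_aux σ i hi
    rw [dterm, dif_pos ⟨hi, hjlt j, by rw [← hτcoe]; exact hΔ⟩]
    rw [boundaryStep, smul_multisetGen]
    simp only [List.get_eq_getElem]
    simp only [hsort]
    congr 1
    rw [coe_eraseIdx_aux _ j.1 (hjlt j)]
    exact congrArg (fun m => Multiset.erase m
      ((((σ.sort (· ≤ ·)).eraseIdx i))[j.1]'(hjlt j))) hτcoe
  · rw [multisetGen, dif_neg (fun h => hΔ h.1), map_zero]
    symm
    apply Finset.sum_eq_zero
    intro j _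
    rw [dterm, dif_neg (fun h => hΔ (by rw [hτcoe]; exact h.2.2))]
lemma multisetGen_zero (R : Type*) [CommRing R] (Δ : Set (Multiset V)) (s : ℕ)
    (τ : Multiset V) : multisetGen R Δ s τ (0 : R) = 0 := by
  rw [multisetGen]; split_ifs <;> simp

lemma cancel (R : Type*) [CommRing R] (Δ : Set (Multiset V)) (E : Set (Sym2 V))
    (hA : ∀ σ τ ρ : Multiset V, σ ∈ Δ → τ ∈ Δ → σ ≤ ρ → ρ ≤ τ → ρ ∈ Δ)
    (hB : ∀ σ ∈ Δ, ∀ x y : V, s(x, y) ∈ E → ({x, y} : Multiset V) ≤ σ →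
      σ - ({x, y} : Multiset V) ∉ Δ)
    (s : ℕ) (σ : Multiset V) (hσ : σ ∈ Δ) (hcard : Multiset.card σ = s + 2)
    (p q : ℕ) (hpq : p < q) (hq : q < s + 2) :
    dterm R Δ E s (σ.sort (· ≤ ·)) p (q-1) + dterm R Δ E s (σ.sort (· ≤ ·)) q p = 0 := by
  set l := σ.sort (· ≤ ·) with hldef
  have hσl : (↑l : Multiset V) = σ := Multiset.sort_eq σ _
  have hlen : l.length = s + 2 := by rw [hldef, Multiset.length_sort, hcard]
  have hp : p < l.length := by omega
  have hq' : q < l.length := by omega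
  have hlep : (l.eraseIdx p).length = s + 1 := by
    rw [List.length_eraseIdx, if_pos hp, hlen]
    omega
  have hleq : (l.eraseIdx q).length = s + 1 := by
    rw [List.length_eraseIdx, if_pos hq', hlen]
    omega

  have hq1 : q - 1 < (l.eraseIdx p).length := by omega
  have hp1 : p < (l.eraseIdx q).length := by omega
  have hq11 : q - 1 + 1 = q := by omega
  have hval1 : (l.eraseIdx p)[q-1]'hq1 = l[q]'hq' := by
    rw [List.getElem_eraseIdx, dif_neg (by omega)]
    simp only [hq11]
  have hval2 : (l.eraseIdx q)[p]'hp1 = l[p]'hp := by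
    rw [List.getElem_eraseIdx, dif_pos hpq]
  have hy' : l[q]'hq' ∈ l.eraseIdx p := by
    rw [← hval1]; exact List.getElem_mem _
  have hρ12 : (↑((l.eraseIdx p).eraseIdx (q-1)) : Multiset V)
      = ↑((l.eraseIdx q).eraseIdx p) := by
    rw [coe_eraseIdx_aux _ _ hq1, coe_eraseIdx_aux _ _ hp1,
      coe_eraseIdx_aux _ _ hp, coe_eraseIdx_aux _ _ hq', hval1, hval2,
      Multiset.erase_comm]
  by_cases hρΔ : (↑((l.eraseIdx p).eraseIdx (q-1)) : Multiset V) ∈ Δ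
  · -- both intermediates in Δ, signs cancel
    have hρle1 : (↑((l.eraseIdx p).eraseIdx (q-1)) : Multiset V) ≤ ↑(l.eraseIdx p) := by
      rw [coe_eraseIdx_aux _ _ hq1]; exact Multiset.erase_le _ _
    have hτ1 : (↑(l.eraseIdx p) : Multiset V) ∈ Δ := by
      refine hA _ σ _ hρΔ hσ hρle1 ?_
      rw [coe_eraseIdx_aux _ _ hp, ← hσl]; exact Multiset.erase_le _ _
    have hτ2 : (↑(l.eraseIdx q) : Multiset V) ∈ Δ := by
      refine hA _ σ _ hρΔ hσ ?_ ?_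
      · rw [hρ12, coe_eraseIdx_aux _ _ hp1]; exact Multiset.erase_le _ _
      · rw [coe_eraseIdx_aux _ _ hq', ← hσl]; exact Multiset.erase_le _ _
    have hxmem : l[p]'hp ∈ σ := by
      rw [← hσl]; exact Multiset.mem_coe.2 (List.getElem_mem _)
    have hc : σ.erase (l[p]'hp) = ↑(l.eraseIdx p) := by
      rw [coe_eraseIdx_aux _ _ hp, hσl]
    have hymem : l[q]'hq' ∈ σ.erase (l[p]'hp) := by
      rw [hc]; exact Multiset.mem_coe.2 hy'
    have hxy : ({l[p]'hp, l[q]'hq'} : Multiset V) ≤ σ := by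
      rw [show ({l[p]'hp, l[q]'hq'} : Multiset V) = (l[p]'hp) ::ₘ {l[q]'hq'} from rfl]
      conv_rhs => rw [← Multiset.cons_erase hxmem]
      exact Multiset.cons_le_cons _ (Multiset.singleton_le.2 hymem)
    have hρeq : σ - ({l[p]'hp, l[q]'hq'} : Multiset V)
        = ↑((l.eraseIdx p).eraseIdx (q-1)) := by
      rw [show ({l[p]'hp, l[q]'hq'} : Multiset V) = (l[p]'hp) ::ₘ {l[q]'hq'} from rfl,
        Multiset.sub_cons, Multiset.sub_singleton, hc,
        coe_eraseIdx_aux _ _ hq1, hval1]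
    have hne : s(l[p]'hp, l[q]'hq') ∉ E := by
      intro hE
      exact hB σ hσ _ _ hE hxy (hρeq ▸ hρΔ)
    -- coefficient computation
    rw [dterm, dterm, dif_pos ⟨hp, hq1, hτ1⟩, dif_pos ⟨hq', hp1, hτ2⟩]
    rw [show ((↑((l.eraseIdx q).eraseIdx p)) : Multiset V)
      = ↑((l.eraseIdx p).eraseIdx (q-1)) from hρ12.symm]
    rw [add_multisetGen]
    -- identify the four countP's
    have hB1 : ((l.eraseIdx p).drop (q-1+1)).countP
          (fun y => decide (s((l.eraseIdx p)[q-1]'hq1, y) ∉ E))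
        = (l.drop (q+1)).countP (fun y => decide (s(l[q]'hq', y) ∉ E)) := by
      rw [hval1, hq11, drop_eraseIdx_lt _ _ _ hpq hp]
    have hB2 : ((l.eraseIdx q).drop (p+1)).countP
          (fun y => decide (s((l.eraseIdx q)[p]'hp1, y) ∉ E))
        = ((l.drop (p+1)).eraseIdx (q-p-1)).countP
          (fun y => decide (s(l[p]'hp, y) ∉ E)) := by
      rw [hval2, drop_eraseIdx_gt _ _ _ hpq hq']
    have hmq : q - p - 1 < (l.drop (p+1)).length := by
      rw [List.length_drop]; omega
    have hgd : (l.drop (p+1))[q-p-1]'hmq = l[q]'hq' := by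
      rw [List.getElem_drop]
      congr 1
      omega
    have hcount : (l.drop (p+1)).countP (fun y => decide (s(l[p]'hp, y) ∉ E))
        = ((l.drop (p+1)).eraseIdx (q-p-1)).countP
            (fun y => decide (s(l[p]'hp, y) ∉ E)) + 1 := by
      rw [countP_eraseIdx_aux _ _ _ hmq, hgd]
      rw [if_pos (by simpa using hne)]
    set a2 : ℕ := ((l.drop (p+1)).eraseIdx (q-p-1)).countP
      (fun y => decide (s(l[p]'hp, y) ∉ E)) with ha2
    set b : ℕ := (l.drop (q+1)).countP (fun y => decide (s(l[q]'hq', y) ∉ E)) with hb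
    have hble : b ≤ s := by
      have := List.countP_le_length (l := l.drop (q+1))
        (p := fun y => decide (s(l[q]'hq', y) ∉ E))
      rw [List.length_drop, hlen] at this
      omega
    have ha2le : a2 + 1 ≤ s + 1 := by
      have := List.countP_le_length (l := l.drop (p+1))
        (p := fun y => decide (s(l[p]'hp, y) ∉ E))
      rw [List.length_drop, hlen, hcount] at this
      omega
    rw [hB1, hB2, hcount]
    rw [← multisetGen_zero R Δ s (↑((l.eraseIdx p).eraseIdx (q-1)))]
    congr 1
    rw [neg_one_pow_sub' (show a2 + 1 ≤ s + 1 from ha2le),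
      neg_one_pow_sub' (show b ≤ s from hble),
      neg_one_pow_sub' (show b ≤ s + 1 from by omega),
      neg_one_pow_sub' (show a2 ≤ s from by omega),
      pow_succ, pow_succ]
    ring
  · -- final multiset not in Δ: both generators vanish
    have hz : ∀ c : R, multisetGen R Δ s (↑((l.eraseIdx p).eraseIdx (q-1))) c = 0 :=
      fun c => by rw [multisetGen, dif_neg (fun h => hρΔ h.1)]
    have hz2 : ∀ c : R, multisetGen R Δ s (↑((l.eraseIdx q).eraseIdx p)) c = 0 :=
      fun c => by rw [← hρ12]; exact hz c
    rw [dterm, dterm]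
    split_ifs <;> simp [hz, hz2]
end


/-- Let `V` be a totally ordered set, `E` a set of unordered pairs of elements
of `V` (`x` and `y` commute iff `s(x,y) ∈ E`), and `Δ` a family of multisets
over `V` satisfying: (A) `Δ` is closed under intermediate multisets; (B) if
`x`, `y` commute and `{x,y} ⊆ σ ∈ Δ`, then `σ ∖ {x,y} ∉ Δ`; (C) any element of
multiplicity `≥ 2` in a member of `Δ` commutes with itself.  Then the boundary
operator defined above satisfies `∂ ∘ ∂ = 0`, i.e. `(C_*, ∂)` is a chain
complex. -/
theorem stmt_4 {V : Type*} [LinearOrder V] (R : Type*) [CommRing R]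
    (Δ : Set (Multiset V)) (E : Set (Sym2 V))
    (hA : ∀ σ τ ρ : Multiset V, σ ∈ Δ → τ ∈ Δ → σ ≤ ρ → ρ ≤ τ → ρ ∈ Δ)
    (hB : ∀ σ ∈ Δ, ∀ x y : V, s(x, y) ∈ E → ({x, y} : Multiset V) ≤ σ →
      σ - ({x, y} : Multiset V) ∉ Δ)
    (hC : ∀ σ ∈ Δ, ∀ x : V, 2 ≤ σ.count x → s(x, x) ∈ E) :
    ∀ s : ℕ, (multisetBoundary R Δ E s).comp (multisetBoundary R Δ E (s + 1)) = 0 := by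
  intro s
  apply Finsupp.lhom_ext
  intro σs c
  rw [LinearMap.comp_apply, LinearMap.zero_apply, boundary_single, map_smul]
  suffices h : multisetBoundary R Δ E s (boundaryGen R Δ E (s+1) σs) = 0 by
    rw [h, smul_zero]
  have hcard : Multiset.card σs.1 = s + 2 := σs.2.2
  have hlen : (σs.1.sort (· ≤ ·)).length = s + 2 := by
    rw [Multiset.length_sort, hcard]
  rw [boundaryGen, map_sum]
  have hstep : ∀ i : Fin (s + 2),
      multisetBoundary R Δ E s (boundaryStep R Δ E (s+1) σs.1
        ((σs.1.sort (· ≤ ·)).get ⟨i.1, by rw [hlen]; exact i.2⟩) i.1)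
      = ∑ j : Fin (s+1), dterm R Δ E s (σs.1.sort (· ≤ ·)) i.1 j.1 := by
    intro i
    simp only [List.get_eq_getElem]
    exact Dstep R Δ E s σs.1 hcard i.1 (by rw [hlen]; exact i.2)
  calc ∑ i : Fin (s + 1 + 1), multisetBoundary R Δ E s (boundaryStep R Δ E (s+1) σs.1
        ((σs.1.sort (· ≤ ·)).get ⟨i.1, by rw [hlen]; exact i.2⟩) i.1)
      = ∑ i : Fin (s + 2), ∑ j : Fin (s+1),
          dterm R Δ E s (σs.1.sort (· ≤ ·)) i.1 j.1 := by
        exact Finset.sum_congr rfl fun i _ => hstep i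
    _ = 0 := by
        rw [← Finset.sum_product']
        refine Finset.sum_involution
          (fun x _ => if h : x.2.1 < x.1.1
            then (⟨x.2.1, by have := x.2.2; omega⟩, ⟨x.1.1 - 1, by have := x.1.2; omega⟩)
            else (⟨x.2.1 + 1, by have := x.2.2; omega⟩,
                  ⟨x.1.1, by have := x.1.2; have := x.2.2; omega⟩))
          ?_ ?_ (fun _ _ => Finset.mem_product.2 ⟨Finset.mem_univ _, Finset.mem_univ _⟩) ?_
        · intro x _
          split_ifs with hlt
          · rw [add_comm]
            exact cancel R Δ E hA hB s σs.1 σs.2.1 hcard x.2.1 x.1.1 hlt x.1.2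
          · exact cancel R Δ E hA hB s σs.1 σs.2.1 hcard x.1.1 (x.2.1 + 1)
              (by omega) (by have := x.2.2; omega)
        · intro x _ _
          split_ifs with hlt <;> intro hEq <;>
            · have h1 := congrArg (fun y => (y.1 : ℕ)) hEq
              simp only at h1
              omega
        · intro x _
          rcases x with ⟨⟨i, hi⟩, ⟨j, hj⟩⟩
          dsimp only
          split_ifs with h1 h2 h2 <;>
            (dsimp only at h2 ⊢; simp only [Prod.mk.injEq, Fin.mk.injEq, and_true, true_and]; omega)
end

section
/- Let λ = (λ₁,…,λ_r) be positive integers, s = (s₁,…,s_r) a sign vector, and Δ_{λ,s} the family of multisets σ of edges and loops on {1,…,r} such that: (i) 0 ≤ deg_σ(a) ≤ λ_a for positively charged a; (ii) λ_a − 1 ≤ deg_σ(a) ≤ λ_a and no loop aa appears, for negatively charged a; (iii) no edge ab appears more than once unless a and b have opposite charges. With the commutation relation where two edges commute iff their intersection contains exactly one negatively charged element (and loops anticommute with everything), Δ_{λ,s} satisfies conditions (A), (B), (C): (A) it is closed under intermediate multisets; (B) removing two commuting edges from a member leaves a non-member; (C) any edge or loop repeated in a member commutes with itself. -/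
/-- The degree of the vertex `a` in a multiset `σ` of edges and loops on
`{1,…,r}`: the number of occurrences of `a` among all edges and loops of `σ`
(a loop `aa` contributes `2`). -/
def multidegree {r : ℕ} (σ : Multiset (Sym2 (Fin r))) (a : Fin r) : ℕ :=
  (σ.map (fun e => if e = s(a, a) then 2 else if a ∈ e then 1 else 0)).sum

/-- The family `Δ_{λ,s}` of multisets of edges and loops on `{1,…,r}`
(`ss a = true` means `a` is positively charged, `ss a = false` negatively):
(i) `deg_σ(a) ≤ λ_a` for positively charged `a`;
(ii) `λ_a - 1 ≤ deg_σ(a) ≤ λ_a` and no loop `aa`, for negatively charged `a`;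
(iii) no edge appears more than once unless its two endpoints have opposite
charges. -/
def deltaFamily (r : ℕ) (lam : Fin r → ℕ) (ss : Fin r → Bool) :
    Set (Multiset (Sym2 (Fin r))) :=
  {σ | (∀ a : Fin r, ss a = true → multidegree σ a ≤ lam a) ∧
       (∀ a : Fin r, ss a = false →
          lam a - 1 ≤ multidegree σ a ∧ multidegree σ a ≤ lam a ∧ s(a, a) ∉ σ) ∧
       (∀ e : Sym2 (Fin r), 2 ≤ σ.count e → ∃ a b : Fin r, e = s(a, b) ∧ ss a ≠ ss b)}

/-- The commutation relation `E_{λ,s}`: two edges commute iff neither is a loop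
and their intersection contains exactly one negatively charged vertex (loops
anticommute with everything). -/
def commuteFamily (r : ℕ) (ss : Fin r → Bool) : Set (Sym2 (Sym2 (Fin r))) :=
  {q | ∃ e f : Sym2 (Fin r), q = s(e, f) ∧ ¬ e.IsDiag ∧ ¬ f.IsDiag ∧
        (∃! a : Fin r, a ∈ e ∧ a ∈ f ∧ ss a = false)}

lemma multidegree_add {r : ℕ} (σ τ : Multiset (Sym2 (Fin r))) (a : Fin r) :
    multidegree (σ + τ) a = multidegree σ a + multidegree τ a := by
  simp [multidegree]

lemma multidegree_mono {r : ℕ} {σ ρ : Multiset (Sym2 (Fin r))} (h : σ ≤ ρ) (a : Fin r) :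
    multidegree σ a ≤ multidegree ρ a := by
  obtain ⟨t, rfl⟩ := Multiset.le_iff_exists_add.mp h
  simp [multidegree_add]

lemma multidegree_pair {r : ℕ} {e f : Sym2 (Fin r)} {a : Fin r}
    (he : e ≠ s(a,a)) (hf : f ≠ s(a,a)) (hae : a ∈ e) (haf : a ∈ f) :
    multidegree ({e, f} : Multiset (Sym2 (Fin r))) a = 2 := by
  simp [multidegree, he, hf, hae, haf]

/-- The family `Δ_{λ,s}` satisfies, with respect to the commutation relation
`E_{λ,s}`, the conditions (A), (B), (C) of the multiset chain complex
construction: (A) closure under intermediate multisets; (B) removing two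
commuting edges from a member leaves a non-member; (C) any repeated edge or
loop in a member commutes with itself. -/
theorem stmt_5 (r : ℕ) (lam : Fin r → ℕ) (hlam : ∀ a, 0 < lam a)
    (ss : Fin r → Bool) :
    -- (A)
    (∀ σ τ ρ : Multiset (Sym2 (Fin r)), σ ∈ deltaFamily r lam ss →
      τ ∈ deltaFamily r lam ss → σ ≤ ρ → ρ ≤ τ → ρ ∈ deltaFamily r lam ss) ∧
    -- (B)
    (∀ σ ∈ deltaFamily r lam ss, ∀ e f : Sym2 (Fin r),
      s(e, f) ∈ commuteFamily r ss → ({e, f} : Multiset (Sym2 (Fin r))) ≤ σ →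
      σ - ({e, f} : Multiset (Sym2 (Fin r))) ∉ deltaFamily r lam ss) ∧
    -- (C)
    (∀ σ ∈ deltaFamily r lam ss, ∀ e : Sym2 (Fin r), 2 ≤ σ.count e →
      s(e, e) ∈ commuteFamily r ss) := by
  refine ⟨?_, ?_, ?_⟩
  · -- (A)
    rintro σ τ ρ ⟨hσ1, hσ2, _⟩ ⟨hτ1, hτ2, hτ3⟩ hσρ hρτ
    refine ⟨fun a ha => le_trans (multidegree_mono hρτ a) (hτ1 a ha),
      fun a ha => ⟨le_trans (hσ2 a ha).1 (multidegree_mono hσρ a),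
        le_trans (multidegree_mono hρτ a) (hτ2 a ha).2.1,
        fun h => (hτ2 a ha).2.2 (Multiset.mem_of_le hρτ h)⟩,
      fun e h => hτ3 e (le_trans h (Multiset.count_le_of_le e hρτ))⟩
  · -- (B)
    rintro σ hσ e f ⟨e', f', hq, hde, hdf, a, ⟨hae, haf, hneg⟩, -⟩ hsub hmem
    -- identify e', f' with e, f (possibly swapped)
    have hef : (a ∈ e ∧ a ∈ f) ∧ e ≠ s(a,a) ∧ f ≠ s(a,a) := by
      rcases Sym2.eq_iff.mp hq with ⟨he, hf⟩ | ⟨he, hf⟩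
      · subst he; subst hf
        exact ⟨⟨hae, haf⟩, fun h => hde (h ▸ Sym2.mk_isDiag_iff.mpr rfl),
          fun h => hdf (h ▸ Sym2.mk_isDiag_iff.mpr rfl)⟩
      · subst he; subst hf
        exact ⟨⟨haf, hae⟩, fun h => hdf (h ▸ Sym2.mk_isDiag_iff.mpr rfl),
          fun h => hde (h ▸ Sym2.mk_isDiag_iff.mpr rfl)⟩
    obtain ⟨⟨hae, haf⟩, hne, hnf⟩ := hef
    have hrec : σ - ({e, f} : Multiset (Sym2 (Fin r))) + ({e, f} : Multiset (Sym2 (Fin r))) = σ :=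
      tsub_add_cancel_of_le hsub
    have hdeg : multidegree σ a
        = multidegree (σ - ({e, f} : Multiset (Sym2 (Fin r)))) a + 2 := by
      conv_lhs => rw [← hrec]
      rw [multidegree_add, multidegree_pair hne hnf hae haf]
    have h1 := (hσ.2.1 a hneg).1
    have h2 := (hσ.2.1 a hneg).2.1
    have h3 := (hmem.2.1 a hneg).1
    have := hlam a
    omega
  · -- (C)
    rintro σ ⟨-, -, h3⟩ e he
    obtain ⟨a, b, rfl, hab⟩ := h3 e he
    have hd : ¬ (s(a, b) : Sym2 (Fin r)).IsDiag := by
      rw [Sym2.mk_isDiag_iff]; rintro rfl; exact hab rfl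
    refine ⟨s(a, b), s(a, b), rfl, hd, hd, ?_⟩
    cases ha : ss a <;> cases hb : ss b
    · exact absurd (ha.trans hb.symm) hab
    · refine ⟨a, ⟨Sym2.mem_mk_left a b, Sym2.mem_mk_left a b, ha⟩, ?_⟩
      rintro y ⟨hy, -, hyf⟩
      rcases Sym2.mem_iff.mp hy with rfl | rfl
      · rfl
      · rw [hb] at hyf; exact absurd hyf (by simp)
    · refine ⟨b, ⟨Sym2.mem_mk_right a b, Sym2.mem_mk_right a b, hb⟩, ?_⟩
      rintro y ⟨hy, -, hyf⟩
      rcases Sym2.mem_iff.mp hy with rfl | rfl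
      · rw [ha] at hyf; exact absurd hyf (by simp)
      · rfl
    · exact absurd (ha.trans hb.symm) hab
end

section
/- In the chain complex X^λ with all-minus signs realized as C(λ⁻;R): if γ = e₀∧⋯∧e_d ⊗ v₁∧⋯∧v_t is a generator with e_i = x_iy_i (x_i < y_i), and γ_i is obtained from γ by deleting e_i and prepending x_i∧y_i to the vertex part, then the number of adjacent-transposition sign changes needed to sort the concatenated vertex sequence of γ_i from that of γ satisfies: sgn(γ_i) = (−1)^{d−η_i}·(−1)^i·sgn(γ), where η_i is the number of edges among e_{i+1},…,e_d disjoint from e_i. Equivalently, 4(d−i) − ((d−i) − η_i) ≡ i + d − η_i (mod 2). -/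
open scoped Classical

section

variable (r : ℕ)

/-- The lexicographic (strict) order on edges, given as ordered pairs. -/
def edgePairLt (e f : Fin r × Fin r) : Prop :=
  e.1 < f.1 ∨ (e.1 = f.1 ∧ e.2 < f.2)

/-- The concatenated vertex sequence `⟨γ⟩ = (x₀,y₀,…,x_d,y_d,v₁,…,v_t)` of a
generator `γ = (edge list, vertex list)`. -/
def vertexSeq (p : List (Fin r × Fin r) × List (Fin r)) : List (Fin r) :=
  p.1.foldr (fun e l => e.1 :: e.2 :: l) p.2

/-- The number of inversions of a list. -/
def invCount (l : List (Fin r)) : ℕ :=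
  ∑ i : Fin l.length, ∑ j : Fin l.length,
    if i.1 < j.1 ∧ l.get j < l.get i then 1 else 0

/-- Two edges are disjoint when they share no vertex. -/
def pairDisjoint (e f : Fin r × Fin r) : Prop :=
  ∀ a : Fin r, (a = e.1 ∨ a = e.2) → ¬ (a = f.1 ∨ a = f.2)

end

/- ### Auxiliary lemmas -/

lemma countP_eq_sum {r : ℕ} (p : Fin r → Bool) (l : List (Fin r)) :
    l.countP p = ∑ j : Fin l.length, if p (l.get j) then 1 else 0 := by
  induction l with
  | nil => simp
  | cons a l ih =>
    simp only [List.length_cons]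
    rw [Fin.sum_univ_succ, List.countP_cons]
    simp only [List.get_cons_succ', List.get_cons_zero, ← ih]
    by_cases hp : p a = true <;> simp only [hp, ↓reduceIte] <;> omega

lemma invCount_cons {r : ℕ} (a : Fin r) (l : List (Fin r)) :
    invCount r (a :: l) = l.countP (fun b => decide (b < a)) + invCount r l := by
  unfold invCount
  simp only [List.length_cons]
  rw [Fin.sum_univ_succ, countP_eq_sum]
  congr 1
  · rw [Fin.sum_univ_succ]
    simp
  · rw [Finset.sum_congr rfl (fun i _ => Fin.sum_univ_succ _)]
    simp

/-- Cross-inversion count between two lists. -/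
def cross {r : ℕ} (u w : List (Fin r)) : ℕ :=
  (u.map (fun a => w.countP (fun b => decide (b < a)))).sum

lemma cross_cons_left {r : ℕ} (a : Fin r) (u w : List (Fin r)) :
    cross (a :: u) w = w.countP (fun b => decide (b < a)) + cross u w := by
  simp [cross]

lemma cross_cons_right {r : ℕ} (b : Fin r) (u w : List (Fin r)) :
    cross u (b :: w) = u.countP (fun a => decide (b < a)) + cross u w := by
  induction u with
  | nil => simp [cross]
  | cons a u ih =>
    rw [cross_cons_left, cross_cons_left, List.countP_cons, List.countP_cons, ih]
    omega

lemma cross_perm_right {r : ℕ} (u : List (Fin r)) {w w' : List (Fin r)} (h : w.Perm w') :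
    cross u w = cross u w' := by
  unfold cross
  congr 1
  exact List.map_congr_left (fun a _ => h.countP_eq _)

lemma invCount_append {r : ℕ} (u w : List (Fin r)) :
    invCount r (u ++ w) = invCount r u + invCount r w + cross u w := by
  induction u with
  | nil => simp [cross, invCount]
  | cons a u ih =>
    simp only [List.cons_append, invCount_cons, ih, List.countP_append, cross_cons_left]
    omega

lemma countP_lt_gt_count {r : ℕ} (x : Fin r) (l : List (Fin r)) :
    l.countP (fun b => decide (b < x)) + l.countP (fun b => decide (x < b)) + l.count x
      = l.length := by
  induction l with
  | nil => simp
  | cons a l ih =>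
    rw [List.countP_cons, List.countP_cons, List.count_cons, List.length_cons]
    rcases lt_trichotomy a x with h | h | h
    · simp [h, h.ne, (not_lt_of_gt h)]; omega
    · simp [h]; omega
    · simp [h, h.ne', (not_lt_of_gt h)]; omega

def flat {r : ℕ} (L : List (Fin r × Fin r)) : List (Fin r) :=
  L.foldr (fun e l => e.1 :: e.2 :: l) []

lemma flat_cons {r : ℕ} (e : Fin r × Fin r) (L : List (Fin r × Fin r)) :
    flat (e :: L) = e.1 :: e.2 :: flat L := rfl

lemma foldr_eq_flat_append {r : ℕ} (L : List (Fin r × Fin r)) (v : List (Fin r)) :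
    L.foldr (fun e l => e.1 :: e.2 :: l) v = flat L ++ v := by
  induction L with
  | nil => rfl
  | cons e L ih => simp [flat_cons, ih]

lemma flat_append {r : ℕ} (L M : List (Fin r × Fin r)) :
    flat (L ++ M) = flat L ++ flat M := by
  induction L with
  | nil => rfl
  | cons e L ih => simp [flat_cons, ih]

lemma flat_length {r : ℕ} (L : List (Fin r × Fin r)) :
    (flat L).length = 2 * L.length := by
  induction L with
  | nil => rfl
  | cons e L ih => simp [flat_cons, ih]; omega

lemma pairDisjoint_iff {r : ℕ} (p q : Fin r) (f : Fin r × Fin r) :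
    pairDisjoint r (p, q) f ↔ f.1 ≠ p ∧ f.2 ≠ p ∧ f.1 ≠ q ∧ f.2 ≠ q := by
  constructor
  · intro h
    exact ⟨fun he => h p (Or.inl rfl) (Or.inl he.symm),
      fun he => h p (Or.inl rfl) (Or.inr he.symm),
      fun he => h q (Or.inr rfl) (Or.inl he.symm),
      fun he => h q (Or.inr rfl) (Or.inr he.symm)⟩
  · rintro ⟨h1, h2, h3, h4⟩ a (rfl | rfl) (rfl | rfl) <;> simp_all

lemma per_edge {r : ℕ} (p q : Fin r) (f : Fin r × Fin r) (hpq : p < q) (hf : f.1 < f.2)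
    (hne : f ≠ (p, q)) :
    ((if f.1 = p then 1 else 0) + (if f.2 = p then 1 else 0)
      + ((if f.1 = q then 1 else 0) + (if f.2 = q then 1 else 0))
      + (if pairDisjoint r (p, q) f then 1 else 0) : ℕ) = 1 := by
  rw [if_congr (pairDisjoint_iff p q f) rfl rfl]
  have hne' : ¬(f.1 = p ∧ f.2 = q) := fun ⟨a, b⟩ => hne (Prod.ext a b)
  by_cases h1 : f.1 = p <;> by_cases h2 : f.2 = p <;> by_cases h3 : f.1 = q <;>
    by_cases h4 : f.2 = q <;> simp_all <;> omega

instance edgePairLt_trans (r : ℕ) : IsTrans (Fin r × Fin r) (edgePairLt r) := by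
  constructor
  rintro a b c (h | ⟨h1, h2⟩) (g | ⟨g1, g2⟩)
  · exact Or.inl (h.trans g)
  · exact Or.inl (g1 ▸ h)
  · exact Or.inl (h1 ▸ g)
  · exact Or.inr ⟨h1.trans g1, h2.trans g2⟩

lemma edgePairLt_ne {r : ℕ} {e f : Fin r × Fin r} (h : edgePairLt r e f) : f ≠ e := by
  rintro rfl
  rcases h with h | ⟨_, h⟩ <;> exact absurd h (lt_irrefl _)

lemma key_count {r : ℕ} (p q : Fin r) (hpq : p < q) (L : List (Fin r × Fin r))
    (hL : ∀ f ∈ L, f.1 < f.2) (hne : ∀ f ∈ L, f ≠ (p, q)) :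
    (flat L).count p + (flat L).count q
      + L.countP (fun f => decide (pairDisjoint r (p, q) f)) = L.length := by
  induction L with
  | nil => simp [flat]
  | cons e L ih =>
    rw [flat_cons, List.count_cons, List.count_cons, List.count_cons, List.count_cons,
      List.countP_cons, List.length_cons]
    have := per_edge p q e hpq (hL e (by simp)) (hne e (by simp))
    have ihh := ih (fun f hf => hL f (by simp [hf])) (fun f hf => hne f (by simp [hf]))
    simp only [beq_iff_eq, decide_eq_true_eq] at *
    omega

/-- For a canonical generator `γ = e₀ ∧ ⋯ ∧ e_d ⊗ v₁ ∧ ⋯ ∧ v_t` of `X^λ`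
(edges strictly increasing with `xᵢ < yᵢ`, vertex list strictly increasing),
let `γᵢ` be obtained by deleting the edge `eᵢ = (xᵢ,yᵢ)` and prepending
`xᵢ ∧ yᵢ` to the vertex part.  With `sgn = (-1)^{inv⟨·⟩}` and `ηᵢ` the number
of edges among `e_{i+1},…,e_d` disjoint from `eᵢ`, one has
`sgn(γᵢ) = (-1)^{d-ηᵢ}·(-1)^i·sgn(γ)`; equivalently,
`4(d-i) - ((d-i) - ηᵢ) ≡ i + d - ηᵢ (mod 2)`. -/
theorem stmt_10 (r d : ℕ) (edges : List (Fin r × Fin r)) (v : List (Fin r))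
    (h1 : edges.Chain' (edgePairLt r)) (h2 : ∀ e ∈ edges, e.1 < e.2)
    (h3 : v.Chain' (· < ·)) (hlen : edges.length = d + 1) (i : Fin (d + 1)) :
    let e := edges.get ⟨i.1, by rw [hlen]; exact i.2⟩
    let ηi := (edges.drop (i.1 + 1)).countP (fun f => decide (pairDisjoint r e f))
    ((-1 : ℤ) ^ invCount r (vertexSeq r (edges.eraseIdx i.1, e.1 :: e.2 :: v)) =
      (-1) ^ (d - ηi) * (-1) ^ i.1 * (-1) ^ invCount r (vertexSeq r (edges, v))) ∧
    Nat.ModEq 2 (4 * (d - i.1) - ((d - i.1) - ηi)) (i.1 + d - ηi) := by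
  intro e ηi
  have hi : i.1 < edges.length := by rw [hlen]; exact i.2
  set A := edges.take i.1 with hA
  set B := edges.drop (i.1 + 1) with hB
  have hget : e = edges[i.1] := rfl
  have hdrop : edges.drop i.1 = e :: B := by
    rw [hget, hB, List.getElem_cons_drop (as := edges) (i := i.1) hi]
  have hdecomp : edges = A ++ e :: B := by
    conv_lhs => rw [← List.take_append_drop i.1 edges]
    rw [hdrop, hA]
  -- basic facts about e and B
  have hpq : e.1 < e.2 := h2 e (by rw [hdecomp]; simp)
  have hq' : ¬(e.2 < e.1) := not_lt_of_gt hpq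
  have hpair : List.Pairwise (edgePairLt r) (e :: B) := by
    have := (List.isChain_iff_pairwise.mp h1).sublist (List.drop_sublist i.1 edges)
    rwa [hdrop] at this
  have hneB : ∀ f ∈ B, f ≠ (e.1, e.2) := by
    intro f hf
    rw [Prod.mk.eta]
    exact edgePairLt_ne ((List.pairwise_cons.mp hpair).1 f hf)
  have hB2 : ∀ f ∈ B, f.1 < f.2 := fun f hf =>
    h2 f ((List.drop_sublist (i.1 + 1) edges).subset hf)
  have hBlen : B.length = d - i.1 := by
    rw [hB, List.length_drop, hlen]; omega
  have hile : i.1 ≤ d := Nat.lt_succ_iff.mp i.2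
  -- counting facts
  have hkc := key_count e.1 e.2 hpq B hB2 hneB
  have hηeq : ηi = List.countP (fun f => decide (pairDisjoint r (e.1, e.2) f)) B := by
    apply List.countP_congr
    intro f _
    simp only [decide_eq_decide, Prod.mk.eta]
  have hkc' : (flat B).count e.1 + (flat B).count e.2 + ηi = B.length := by
    rw [hηeq]; exact hkc
  have hdec1 : decide (e.2 < e.1) = false := by simp [hq']
  have hcc1 := countP_lt_gt_count e.1 (flat B)
  have hcc2 := countP_lt_gt_count e.2 (flat B)
  have hflen := flat_length B
  have hηle : ηi ≤ B.length := List.countP_le_length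
  -- the two vertex sequences
  have hL : vertexSeq r (edges, v) = flat A ++ (e.1 :: e.2 :: (flat B ++ v)) := by
    show edges.foldr _ v = _
    rw [foldr_eq_flat_append, hdecomp, flat_append, flat_cons]
    simp
  have hL' : vertexSeq r (edges.eraseIdx i.1, e.1 :: e.2 :: v)
      = flat A ++ (flat B ++ (e.1 :: e.2 :: v)) := by
    show (edges.eraseIdx i.1).foldr _ _ = _
    rw [List.eraseIdx_eq_take_drop_succ, foldr_eq_flat_append, flat_append, ← hA, ← hB]
    simp
  -- permutation for the cross term with flat A
  have hperm : (e.1 :: e.2 :: (flat B ++ v)).Perm (flat B ++ (e.1 :: e.2 :: v)) := by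
    have h := (List.perm_append_comm (l₁ := [e.1, e.2]) (l₂ := flat B)).append_right v
    simpa using h
  have hcrossF : cross (flat A) (e.1 :: e.2 :: (flat B ++ v))
      = cross (flat A) (flat B ++ (e.1 :: e.2 :: v)) := cross_perm_right _ hperm
  -- expansion of both inversion counts
  have E1 : invCount r (vertexSeq r (edges, v)) =
      invCount r (flat A) + cross (flat A) (e.1 :: e.2 :: (flat B ++ v))
      + ((flat B).countP (fun b => decide (b < e.1)) + v.countP (fun b => decide (b < e.1))
        + ((flat B).countP (fun b => decide (b < e.2)) + v.countP (fun b => decide (b < e.2)))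
        + (invCount r (flat B) + invCount r v + cross (flat B) v)) := by
    rw [hL]
    simp only [invCount_append, invCount_cons, List.countP_cons, List.countP_append, hq',
      hdec1, decide_false, Bool.false_eq_true, if_false]
    omega
  have E2 : invCount r (vertexSeq r (edges.eraseIdx i.1, e.1 :: e.2 :: v)) =
      invCount r (flat A) + cross (flat A) (flat B ++ (e.1 :: e.2 :: v))
      + (invCount r (flat B)
        + (v.countP (fun b => decide (b < e.1)) + v.countP (fun b => decide (b < e.2))
          + invCount r v)
        + ((flat B).countP (fun a => decide (e.1 < a)) + (flat B).countP (fun a => decide (e.2 < a))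
          + cross (flat B) v)) := by
    rw [hL']
    simp only [invCount_append, invCount_cons, List.countP_cons, List.countP_append,
      cross_cons_right, hq', hdec1, decide_false, Bool.false_eq_true, if_false]
    omega
  constructor
  · rw [← pow_add, ← pow_add]
    rw [neg_one_pow_eq_pow_mod_two, neg_one_pow_eq_pow_mod_two
      (n := d - ηi + i.1 + invCount r (vertexSeq r (edges, v)))]
    congr 1
    omega
  · unfold Nat.ModEq
    omega
end
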